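/- A monotone transit function R on a finite set X satisfying (uc) also satisfies (k): whenever R(u,v) ∩ R(x,y) ≠ ∅, there exist p,q ∈ X with R(u,v) ∩ R(x,y) = R(p,q). -/

import Mathlib

variable {X : Type*}

/-- Transit function axioms (t1),(t2),(t3). -/
def IsTransit (R : X → X → Set X) : Prop :=
  (∀ u v, u ∈ R u v) ∧ (∀ u v, R u v = R v u) ∧ (∀ u, R u u = {u})

/-- Monotonicity axiom (m). -/
def AxM (R : X → X → Set X) : Prop :=
  ∀ u v p q, p ∈ R u v → q ∈ R u v → R p q ⊆ R u v

/-- Axiom (w). -/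
def AxW (R : X → X → Set X) : Prop :=
  ∀ x y z, z ∈ R x y ∨ y ∈ R x z ∨ x ∈ R y z

/-- Axiom (w₂). -/
def AxW2 (R : X → X → Set X) : Prop :=
  ∀ p q u v s t,
    R p q ∩ R u v ∩ R s t = R p q ∩ R u v ∨
    R p q ∩ R u v ∩ R s t = R p q ∩ R s t ∨
    R p q ∩ R u v ∩ R s t = R u v ∩ R s t

/-- Axiom (w₃). -/
def AxW3 (R : X → X → Set X) : Prop :=
  ∀ u v p q x y z, x ∈ R u v → x ∉ R p q → y ∈ R u v → y ∈ R p q →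
    z ∈ R p q → z ∉ R u v → y ∈ R x z

/-- Axiom (x'). -/
def AxX' (R : X → X → Set X) : Prop :=
  ∀ x y z, z ∉ R x y → R x y ⊆ R x z ∪ R z y

/-- Axiom (x). -/
def AxX (R : X → X → Set X) : Prop :=
  ∀ x y z, R x y ⊆ R x z ∪ R z y

/-- Axiom (u). -/
def AxU (R : X → X → Set X) : Prop :=
  ∀ x y z, z ∈ R x y → R x y = R x z ∪ R z y

/-- Axiom (mm). -/
def AxMM (R : X → X → Set X) : Prop :=
  ∀ x y u v, (R x y ∩ R u v).Nonempty →
    ∃ p ∈ R x y ∪ R u v, ∃ q ∈ R x y ∪ R u v, R x y ∪ R u v ⊆ R p q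

/-- Axiom (uc). -/
def AxUC (R : X → X → Set X) : Prop :=
  ∀ x y u v, (R x y ∩ R u v).Nonempty →
    ∃ p ∈ R x y ∪ R u v, ∃ q ∈ R x y ∪ R u v, R x y ∪ R u v = R p q

/-- Axiom (a'). -/
def AxA' (R : X → X → Set X) : Prop :=
  ∃ u v, R u v = Set.univ

/-- Axiom (k). -/
def AxK (R : X → X → Set X) : Prop :=
  ∀ u v x y, (R u v ∩ R x y).Nonempty → ∃ p q, R u v ∩ R x y = R p q

/-- Axiom (wp). -/
def AxWP (R : X → X → Set X) : Prop :=
  ∀ u v x y p q, (R u v ∩ R x y).Nonempty → (R u v ∩ R p q).Nonempty →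
    (R x y ∩ R p q).Nonempty →
    R p q ⊆ R u v ∪ R x y ∨ R u v ⊆ R p q ∪ R x y ∨ R x y ⊆ R p q ∪ R u v

/-- Axiom (o). -/
def AxO (R : X → X → Set X) : Prop :=
  ∀ u v, ∃ p ∈ R u v, ∃ q ∈ R u v, ∀ z ∈ R u v, R p z ∪ R z q = R u v

/-- Axiom (o'). -/
def AxO' (R : X → X → Set X) : Prop :=
  ∀ u v, ∀ z ∈ R u v, ∃ p ∈ R u v, ∃ q ∈ R u v, R p z ∪ R z q = R u v

/-- Weak hierarchy condition for a set system. -/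
def WeakHierarchy (𝒞 : Set (Set X)) : Prop :=
  ∀ A ∈ 𝒞, ∀ B ∈ 𝒞, ∀ C ∈ 𝒞,
    A ∩ B ∩ C = A ∩ B ∨ A ∩ B ∩ C = A ∩ C ∨ A ∩ B ∩ C = B ∩ C

theorem stmt8 {X : Type*} [Fintype X] (R : X → X → Set X)
    (hT : IsTransit R) (hM : AxM R) (hUC : AxUC R) : AxK R := by
  obtain ⟨h1, h2, h3⟩ := hT
  intro u v x y hne
  set A := R u v ∩ R x y with hA
  -- pairs whose endpoints lie in A
  set T : Set (X × X) := {pq | pq.1 ∈ A ∧ pq.2 ∈ A} with hTdef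
  have hTne : T.Nonempty := by
    obtain ⟨w, hw⟩ := hne
    exact ⟨(w, w), hw, hw⟩
  obtain ⟨⟨p, q⟩, hpq, hmax⟩ :=
    Set.Finite.exists_maximalFor (fun pq : X × X => (R pq.1 pq.2).ncard) T
      (Set.toFinite T) hTne
  obtain ⟨hp, hq⟩ := hpq
  have hsub : R p q ⊆ A := by
    intro z hz
    exact ⟨hM u v p q hp.1 hq.1 hz, hM x y p q hp.2 hq.2 hz⟩
  refine ⟨p, q, ?_⟩
  apply Set.Subset.antisymm _ hsub
  intro z hz
  have hzp : z ∈ R p z := by rw [h2 p z]; exact h1 z p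
  have hint : (R p q ∩ R p z).Nonempty := ⟨p, h1 p q, h1 p z⟩
  obtain ⟨p', hp', q', hq', heq⟩ := hUC p q p z hint
  have hpzA : R p z ⊆ A := by
    intro w hw
    exact ⟨hM u v p z hp.1 hz.1 hw, hM x y p z hp.2 hz.2 hw⟩
  have hUA : R p q ∪ R p z ⊆ A := Set.union_subset hsub hpzA
  have hT' : (p', q') ∈ T := ⟨hUA hp', hUA hq'⟩
  have hle : (R p q).ncard ≤ (R p' q').ncard := by
    rw [← heq]
    exact Set.ncard_le_ncard Set.subset_union_left (Set.toFinite _)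
  have := le_antisymm hle (hmax hT' hle)
  have hsub2 : R p q ⊆ R p' q' := by rw [← heq]; exact Set.subset_union_left
  have heq2 : R p q = R p' q' :=
    Set.eq_of_subset_of_ncard_le hsub2 (le_of_eq this.symm) (Set.toFinite _)
  rw [heq2, ← heq]
  exact Set.mem_union_right _ hzp
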